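/- Up to projective equivalence there is exactly one 32-cap in PG(5,2): every cap S with 32 elements is the complement in V \ {0} of a 5-dimensional linear subspace of V; in particular, any two caps of size 32 are projectively equivalent. -/

import Mathlib

/-- The ambient 6-dimensional vector space over GF(2). -/
abbrev V : Type := Fin 6 → ZMod 2

/-- A cap in PG(5,2): a finite set of nonzero vectors of `V` no three pairwise
distinct elements of which sum to `0`. -/
def IsCap (S : Set V) : Prop :=
  S.Finite ∧ (∀ v ∈ S, v ≠ 0) ∧
    ∀ a ∈ S, ∀ b ∈ S, ∀ c ∈ S, a ≠ b → a ≠ c → b ≠ c → a + b + c ≠ 0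

/-- A cap is complete if it cannot be extended by any nonzero vector. -/
def IsCompleteCap (S : Set V) : Prop :=
  IsCap S ∧ ∀ v : V, v ≠ 0 → v ∉ S → ¬ IsCap (insert v S)

/-- Projective equivalence of caps: some linear automorphism of `V` maps one onto the other. -/
def ProjEquiv (S T : Set V) : Prop :=
  ∃ A : V ≃ₗ[ZMod 2] V, ⇑A '' S = T

/-- The `i`-th standard basis vector of `V`. -/
def e (i : Fin 6) : V := Pi.single i 1

lemma V_add_self (a : V) : a + a = 0 := by
  funext i
  simp only [Pi.add_apply, Pi.zero_apply]
  exact CharTwo.add_self_eq_zero _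

lemma cardV : Nat.card V = 64 := by
  simp [Nat.card_eq_fintype_card]

lemma cap_sum_not_mem {S : Set V} (hS : IsCap S) (h32 : S.ncard = 32) :
    ∀ a ∈ S, ∀ b ∈ S, a + b ∉ S := by
  obtain ⟨hfin, hnz, hcap⟩ := hS
  intro a ha b hb hab
  by_cases h : a = b
  · subst h
    rw [V_add_self] at hab
    exact hnz 0 hab rfl
  · refine hcap a ha b hb (a + b) hab h ?_ ?_ ?_
    · intro he
      apply hnz b hb
      have := congrArg (a + ·) he
      simpa [V_add_self, ← add_assoc] using this.symm
    · intro he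
      apply hnz a ha
      have := congrArg (· + b) he
      simpa [add_assoc, V_add_self] using this.symm
    · exact V_add_self _

lemma cap_compl_mem {S : Set V} (hS : IsCap S) (h32 : S.ncard = 32) :
    ∀ a ∈ S, ∀ h : V, h ∉ S → a + h ∈ S := by
  intro a ha h hh
  have himg : ((a + ·) '' S) = Sᶜ := by
    apply Set.eq_of_subset_of_ncard_le
    · rintro x ⟨s, hs, rfl⟩
      exact cap_sum_not_mem hS h32 a ha s hs
    · have h1 : ((a + ·) '' S).ncard = 32 := by
        rw [Set.ncard_image_of_injective _ (add_right_injective a), h32]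
      have h2 : Sᶜ.ncard = 32 := by
        have := Set.ncard_add_ncard_compl S
        rw [h32, cardV] at this; omega
      rw [h1, h2]
    · exact Set.toFinite _
  have hmem : h ∈ (a + ·) '' S := by rw [himg]; exact hh
  obtain ⟨s, hs, rfl⟩ := hmem
  rw [show a + (a + s) = s by rw [← add_assoc, V_add_self, zero_add]]
  exact hs

lemma part1 (S : Set V) (hS : IsCap S) (h32 : S.ncard = 32) :
    ∃ H : Submodule (ZMod 2) V,
      Module.finrank (ZMod 2) H = 5 ∧ S = {v : V | v ∉ H} := by
  obtain ⟨a, ha⟩ : S.Nonempty := by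
    rw [← Set.ncard_pos hS.1, h32]; norm_num
  have hzero : (0 : V) ∉ S := fun h0 => hS.2.1 0 h0 rfl
  refine ⟨{ carrier := Sᶜ
            zero_mem' := hzero
            add_mem' := ?_
            smul_mem' := ?_ }, ?_, ?_⟩
  · intro x y hx hy hxy
    have h1 : a + x ∈ S := cap_compl_mem hS h32 a ha x hx
    have h2 := cap_sum_not_mem hS h32 (a + x) h1 (x + y) hxy
    apply h2
    rw [show a + x + (x + y) = a + y + (x + x) by ring, V_add_self, add_zero]
    exact cap_compl_mem hS h32 a ha y hy
  · intro c x hx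
    have hc : c = 0 ∨ c = 1 := by revert c; decide
    rcases hc with rfl | rfl
    · simpa using hzero
    · simpa using hx
  · -- finrank = 5
    set H : Submodule (ZMod 2) V :=
      { carrier := Sᶜ
        zero_mem' := hzero
        add_mem' := by
          intro x y hx hy hxy
          have h1 : a + x ∈ S := cap_compl_mem hS h32 a ha x hx
          have h2 := cap_sum_not_mem hS h32 (a + x) h1 (x + y) hxy
          apply h2
          rw [show a + x + (x + y) = a + y + (x + x) by ring, V_add_self, add_zero]
          exact cap_compl_mem hS h32 a ha y hy
        smul_mem' := by
          intro c x hx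
          have hc : c = 0 ∨ c = 1 := by revert c; decide
          rcases hc with rfl | rfl
          · simpa using hzero
          · simpa using hx } with hH
    have hcard : Nat.card H = 32 := by
      have : Nat.card H = (Sᶜ).ncard := (Nat.card_coe_set_eq Sᶜ)
      rw [this]
      have := Set.ncard_add_ncard_compl S
      rw [h32, cardV] at this; omega
    haveI : Fintype H := Fintype.ofFinite _
    have hpow : (32 : ℕ) = 2 ^ Module.finrank (ZMod 2) H := by
      have hc := Module.card_eq_pow_finrank (K := ZMod 2) (V := H)
      rw [ZMod.card, ← Nat.card_eq_fintype_card, hcard] at hc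
      exact hc
    have : (2:ℕ) ^ 5 = 2 ^ Module.finrank (ZMod 2) H := by norm_num [← hpow]
    exact (Nat.pow_right_injective (le_refl 2) this).symm
  · ext v
    simp only [Set.mem_setOf_eq]
    change v ∈ S ↔ ¬ v ∈ Sᶜ
    simp

lemma part2 (H1 H2 : Submodule (ZMod 2) V)
    (h1 : Module.finrank (ZMod 2) H1 = 5) (h2 : Module.finrank (ZMod 2) H2 = 5) :
    ∃ A : V ≃ₗ[ZMod 2] V, ⇑A '' {v : V | v ∉ H1} = {v : V | v ∉ H2} := by
  have frV : Module.finrank (ZMod 2) V = 6 := by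
    simp [Module.finrank_pi]
  obtain ⟨K1, hK1⟩ := H1.exists_isCompl
  obtain ⟨K2, hK2⟩ := H2.exists_isCompl
  have fK1 : Module.finrank (ZMod 2) K1 = 1 := by
    have := Submodule.finrank_add_eq_of_isCompl hK1
    rw [h1, frV] at this; omega
  have fK2 : Module.finrank (ZMod 2) K2 = 1 := by
    have := Submodule.finrank_add_eq_of_isCompl hK2
    rw [h2, frV] at this; omega
  let e1 : H1 ≃ₗ[ZMod 2] H2 := LinearEquiv.ofFinrankEq _ _ (by rw [h1, h2])
  let e2 : K1 ≃ₗ[ZMod 2] K2 := LinearEquiv.ofFinrankEq _ _ (by rw [fK1, fK2])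
  let A : V ≃ₗ[ZMod 2] V :=
    ((Submodule.prodEquivOfIsCompl H1 K1 hK1).symm.trans (e1.prodCongr e2)).trans
      (Submodule.prodEquivOfIsCompl H2 K2 hK2)
  have hmap : ∀ x ∈ H1, A x ∈ H2 := by
    intro x hx
    have : A x = (e1 ⟨x, hx⟩ : V) := by
      simp only [A, LinearEquiv.trans_apply]
      rw [show ((Submodule.prodEquivOfIsCompl H1 K1 hK1).symm x)
            = (⟨x, hx⟩, 0) from Submodule.prodEquivOfIsCompl_symm_apply_left H1 K1 hK1 (⟨x, hx⟩ : H1)]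
      simp
    rw [this]
    exact (e1 ⟨x, hx⟩).2
  have hmap' : Submodule.map (A : V →ₗ[ZMod 2] V) H1 = H2 := by
    apply Submodule.eq_of_le_of_finrank_eq
    · rintro y ⟨x, hx, rfl⟩
      exact hmap x hx
    · rw [LinearEquiv.finrank_map_eq, h1, h2]
  refine ⟨A, ?_⟩
  ext y
  constructor
  · rintro ⟨x, hx, rfl⟩
    simp only [Set.mem_setOf_eq] at hx ⊢
    intro hy
    rw [← hmap'] at hy
    obtain ⟨x', hx', he⟩ := hy
    exact hx (by rwa [← A.injective he])
  · intro hy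
    refine ⟨A.symm y, ?_, by simp⟩
    simp only [Set.mem_setOf_eq] at hy ⊢
    intro hx
    apply hy
    rw [← hmap']
    exact ⟨A.symm y, hx, by simp⟩

/-- Every 32-cap in PG(5,2) is the complement of a hyperplane, and any two 32-caps
are projectively equivalent. -/
theorem cap_card_32_unique :
    (∀ S : Set V, IsCap S → S.ncard = 32 → ∃ H : Submodule (ZMod 2) V,
      Module.finrank (ZMod 2) H = 5 ∧ S = {v : V | v ∉ H}) ∧
    (∀ S T : Set V, IsCap S → S.ncard = 32 → IsCap T → T.ncard = 32 → ProjEquiv S T) := by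
  refine ⟨part1, ?_⟩
  intro S T hS hS32 hT hT32
  obtain ⟨H1, h1, rfl⟩ := part1 S hS hS32
  obtain ⟨H2, h2, rfl⟩ := part1 T hT hT32
  exact part2 H1 H2 h1 h2
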